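/- Let Ω ⊆ ℝ² be a nonempty bounded open set and let c be a Poisson solution on Ω. Then for every P ∈ Ω, c(P) ≥ (K/(4D))·dist(P, ∂Ω)². -/

import Mathlib

open Metric Set Filter
open scoped Matrix RealInnerProductSpace Topology

noncomputable section

/-- The Euclidean plane ℝ². -/
abbrev E2 := EuclideanSpace ℝ (Fin 2)

/-- The Laplacian `c_xx + c_yy` of a function on the plane. -/
noncomputable def lap (c : E2 → ℝ) (p : E2) : ℝ :=
  ∑ i : Fin 2, fderiv ℝ (fun q => fderiv ℝ c q (EuclideanSpace.single i 1)) p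
    (EuclideanSpace.single i 1)

/-- A Poisson solution on a bounded open set `Ω ⊆ ℝ²` (for fixed constants `K, D`):
continuous on the closure of `Ω`, twice continuously differentiable on `Ω`,
satisfying `Δc = -K/D` on `Ω` and `c = 0` on the boundary `∂Ω`. -/
structure IsPoissonSolution (K D : ℝ) (Ω : Set E2) (c : E2 → ℝ) : Prop where
  contOn : ContinuousOn c (closure Ω)
  smooth : ContDiffOn ℝ 2 c Ω
  eqn : ∀ p ∈ Ω, lap c p = -(K / D)
  bdry : ∀ p ∈ frontier Ω, c p = 0

/-- first derivative of φ q = ∑ j (q j - P j)^2 -/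
lemma hasFDerivAt_phi (P q : E2) :
    HasFDerivAt (fun q : E2 => ∑ j : Fin 2, (q j - P j) ^ 2)
      (∑ j : Fin 2, (2 * (q j - P j)) • (EuclideanSpace.proj j : E2 →L[ℝ] ℝ)) q := by
  apply HasFDerivAt.fun_sum
  intro j _
  have h1 : HasFDerivAt (fun q : E2 => q j - P j)
      (EuclideanSpace.proj j : E2 →L[ℝ] ℝ) q :=
    (EuclideanSpace.proj j : E2 →L[ℝ] ℝ).hasFDerivAt.sub_const (P j)
  have h2 := h1.mul h1
  have : HasFDerivAt (fun q : E2 => (q j - P j) * (q j - P j))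
      ((2 * (q j - P j)) • (EuclideanSpace.proj j : E2 →L[ℝ] ℝ)) q := by
    refine h2.congr_fderiv ?_
    module
  simpa [pow_two] using this

lemma phi_deriv_apply (P q b : E2) :
    (∑ j : Fin 2, (2 * (q j - P j)) • (EuclideanSpace.proj j : E2 →L[ℝ] ℝ)) b
      = ∑ j : Fin 2, 2 * (q j - P j) * b j := by
  simp [ContinuousLinearMap.sum_apply, mul_comm]

/-- derivative of q ↦ ∑ j 2*(q j - P j)*b j -/
lemma hasFDerivAt_phi2 (P x0 b : E2) :
    HasFDerivAt (fun q : E2 => ∑ j : Fin 2, 2 * (q j - P j) * b j)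
      (∑ j : Fin 2, (2 * b j) • (EuclideanSpace.proj j : E2 →L[ℝ] ℝ)) x0 := by
  apply HasFDerivAt.fun_sum
  intro j _
  have h1 : HasFDerivAt (fun q : E2 => q j - P j)
      (EuclideanSpace.proj j : E2 →L[ℝ] ℝ) x0 :=
    (EuclideanSpace.proj j : E2 →L[ℝ] ℝ).hasFDerivAt.sub_const (P j)
  have h2 := (h1.const_mul 2).mul_const (b j)
  refine h2.congr_fderiv ?_
  ext v
  simp [mul_comm, mul_assoc, mul_left_comm]

lemma phi2_apply_single (i : Fin 2) :
    (∑ j : Fin 2, (2 * (EuclideanSpace.single i (1:ℝ)) j) • (EuclideanSpace.proj j : E2 →L[ℝ] ℝ))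
      (EuclideanSpace.single i 1) = 2 := by
  simp [ContinuousLinearMap.sum_apply, EuclideanSpace.single_apply, Finset.sum_ite_eq']

lemma contDiff_phi (P : E2) : ContDiff ℝ 2 (fun q : E2 => ∑ j : Fin 2, (q j - P j) ^ 2) := by
  apply ContDiff.sum
  intro j _
  exact ((EuclideanSpace.proj (𝕜 := ℝ) j).contDiff.sub contDiff_const).pow 2

lemma second_deriv_test {g g' : ℝ → ℝ} {a : ℝ}
    (hmin : IsLocalMin g 0)
    (hg : ∀ᶠ t in 𝓝 (0:ℝ), HasDerivAt g (g' t) t)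
    (hg' : HasDerivAt g' a 0) : 0 ≤ a := by
  by_contra h
  push_neg at h
  have h0 : g' 0 = 0 := hmin.hasDerivAt_eq_zero hg.self_of_nhds
  have hslope : Tendsto (slope g' 0) (𝓝[≠] 0) (𝓝 a) :=
    hasDerivAt_iff_tendsto_slope.1 hg'
  have hneg : ∀ᶠ t in 𝓝[≠] (0:ℝ), slope g' 0 t < a / 2 :=
    hslope (Iio_mem_nhds (by linarith))
  rw [eventually_nhdsWithin_iff] at hneg
  have H : ∀ᶠ t in 𝓝 (0:ℝ),
      HasDerivAt g (g' t) t ∧ (t ∈ ({0}ᶜ : Set ℝ) → slope g' 0 t < a / 2) ∧ g 0 ≤ g t :=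
    hg.and (hneg.and hmin)
  rw [Metric.eventually_nhds_iff] at H
  obtain ⟨δ, hδ, hH⟩ := H
  set t0 := δ / 2 with ht0
  have ht0pos : 0 < t0 := by positivity
  have hmem : ∀ s ∈ Set.Icc (0:ℝ) t0, dist s 0 < δ := by
    intro s hs
    rw [Real.dist_eq, sub_zero, abs_of_nonneg hs.1]
    have := hs.2
    simp only [ht0] at this ⊢
    linarith
  have hcont : ContinuousOn g (Set.Icc 0 t0) := fun s hs =>
    ((hH (hmem s hs)).1.continuousAt).continuousWithinAt
  obtain ⟨ξ, hξ, hξeq⟩ := exists_hasDerivAt_eq_slope g g' ht0pos hcont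
    (fun s hs => (hH (hmem s ⟨le_of_lt hs.1, le_of_lt hs.2⟩)).1)
  have hξδ : dist ξ 0 < δ := hmem ξ ⟨le_of_lt hξ.1, le_of_lt hξ.2⟩
  have hsl : slope g' 0 ξ < a / 2 := (hH hξδ).2.1 (by simpa using ne_of_gt hξ.1)
  rw [slope_def_field, h0, sub_zero, sub_zero] at hsl
  have hgξ : g' ξ < a / 2 * ξ := by
    rw [div_lt_iff₀ hξ.1] at hsl
    linarith
  have hneg2 : g' ξ < 0 := lt_trans hgξ (by nlinarith [hξ.1])
  rw [hξeq] at hneg2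
  have : g t0 < g 0 := by
    rw [div_neg_iff] at hneg2
    rcases hneg2 with ⟨h1, _⟩ | ⟨h1, h2⟩
    · linarith
    · linarith
  have := (hH (by rw [Real.dist_eq, sub_zero, abs_of_pos ht0pos]; simp [ht0]; linarith)).2.2
  linarith


set_option maxHeartbeats 1000000 in
/-- A Poisson solution on a nonempty bounded open set satisfies the
lower bound `c(P) ≥ (K/(4D))·dist(P, ∂Ω)²` at every `P ∈ Ω`. -/
theorem poisson_lower_bound (K D : ℝ) (hK : 0 < K) (hD : 0 < D)
    (Ω : Set E2) (hΩ : IsOpen Ω) (hΩb : Bornology.IsBounded Ω) (hne : Ω.Nonempty)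
    (c : E2 → ℝ) (hc : IsPoissonSolution K D Ω c) :
    ∀ P ∈ Ω, K / (4 * D) * Metric.infDist P (frontier Ω) ^ 2 ≤ c P := by
  intro P hP
  set M := K / (4 * D) with hM
  have hMpos : 0 < M := by positivity
  set r := Metric.infDist P (frontier Ω) with hr
  have hrnn : 0 ≤ r := Metric.infDist_nonneg
  set φ : E2 → ℝ := fun q => ∑ j : Fin 2, (q j - P j) ^ 2 with hφdef
  refine le_of_forall_pos_le_add fun δ hδ => ?_
  set ε := min M (δ / (r ^ 2 + 1)) with hε
  have hεpos : 0 < ε := lt_min hMpos (by positivity)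
  set a := M - ε with ha
  have hann : 0 ≤ a := sub_nonneg.2 (min_le_left _ _)
  set v : E2 → ℝ := fun q => c q + a * φ q with hv
  have hφcont : Continuous φ := (contDiff_phi P).continuous
  have hvcont : ContinuousOn v (closure Ω) :=
    hc.contOn.add ((continuous_const.mul hφcont).continuousOn)
  have hcomp : IsCompact (closure Ω) := hΩb.isCompact_closure
  have hnecl : (closure Ω).Nonempty := hne.mono subset_closure
  obtain ⟨x0, hx0cl, hx0min⟩ := hcomp.exists_isMinOn hnecl hvcont
  -- v is C² on Ω
  have hvC2 : ContDiffOn ℝ 2 v Ω :=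
    hc.smooth.add ((contDiff_const.mul (contDiff_phi P)).contDiffOn)
  -- x0 cannot be in Ω
  have hx0notΩ : x0 ∉ Ω := by
    intro hx0
    -- fderiv v differentiable at x0
    have hfd : ContDiffOn ℝ 1 (fderiv ℝ v) Ω :=
      hvC2.fderiv_of_isOpen hΩ (by norm_num)
    have hfdiff : DifferentiableAt ℝ (fderiv ℝ v) x0 :=
      ((hfd.differentiableOn (by norm_num)) x0 hx0).differentiableAt (hΩ.mem_nhds hx0)
    have hcfd' : ContDiffOn ℝ 1 (fderiv ℝ c) Ω :=
      hc.smooth.fderiv_of_isOpen hΩ (by norm_num)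
    have hcfdiff : DifferentiableAt ℝ (fderiv ℝ c) x0 :=
      ((hcfd'.differentiableOn (by norm_num)) x0 hx0).differentiableAt (hΩ.mem_nhds hx0)
    -- each diagonal second derivative of v at x0 is nonneg
    have hdiag : ∀ i : Fin 2, 0 ≤
        fderiv ℝ (fun q => fderiv ℝ v q (EuclideanSpace.single i 1)) x0
          (EuclideanSpace.single i 1) := by
      intro i
      set b := EuclideanSpace.single i (1 : ℝ) with hb
      have hGd : DifferentiableAt ℝ (fun q => fderiv ℝ v q b) x0 :=
        hfdiff.clm_apply (differentiableAt_const _)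
      have hL : ∀ t : ℝ, HasDerivAt (fun t : ℝ => x0 + t • b) b t := fun t => by
        simpa using ((hasDerivAt_id t).smul_const b).const_add x0
      have hcontL : Continuous (fun t : ℝ => x0 + t • b) :=
        continuous_const.add (continuous_id.smul continuous_const)
      have hev : ∀ᶠ t in 𝓝 (0 : ℝ), x0 + t • b ∈ Ω := by
        have h0 : (fun t : ℝ => x0 + t • b) 0 = x0 := by simp
        have := hcontL.continuousAt (x := (0 : ℝ))
        exact this.preimage_mem_nhds
          (by simp only [zero_smul, add_zero]; exact hΩ.mem_nhds hx0)
      have gmin : IsLocalMin (fun t : ℝ => v (x0 + t • b)) 0 := by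
        refine hev.mono fun t ht => ?_
        have := hx0min (subset_closure ht)
        simpa using this
      have hg : ∀ᶠ t in 𝓝 (0 : ℝ),
          HasDerivAt (fun t : ℝ => v (x0 + t • b))
            ((fun t : ℝ => fderiv ℝ v (x0 + t • b) b) t) t := by
        refine hev.mono fun t ht => ?_
        have hvd : DifferentiableAt ℝ v (x0 + t • b) :=
          ((hvC2.differentiableOn (by norm_num)) _ ht).differentiableAt (hΩ.mem_nhds ht)
        exact hvd.hasFDerivAt.comp_hasDerivAt t (hL t)
      have hg' : HasDerivAt (fun t : ℝ => fderiv ℝ v (x0 + t • b) b)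
          (fderiv ℝ (fun q => fderiv ℝ v q b) x0 b) 0 := by
        have hGfd : HasFDerivAt (fun q => fderiv ℝ v q b)
            (fderiv ℝ (fun q => fderiv ℝ v q b) x0) ((fun t : ℝ => x0 + t • b) 0) := by
          simpa using hGd.hasFDerivAt
        exact hGfd.comp_hasDerivAt 0 (hL 0)
      exact second_deriv_test gmin hg hg'
    have hlapnn : 0 ≤ lap v x0 := Finset.sum_nonneg fun i _ => hdiag i
    -- compute lap v x0
    have hAdd : ∀ q ∈ Ω, fderiv ℝ v q = fderiv ℝ c q
        + a • (∑ j : Fin 2, (2 * (q j - P j)) • (EuclideanSpace.proj j : E2 →L[ℝ] ℝ)) := by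
      intro q hq
      have hcd : DifferentiableAt ℝ c q :=
        ((hc.smooth.differentiableOn (by norm_num)) q hq).differentiableAt (hΩ.mem_nhds hq)
      exact (hcd.hasFDerivAt.add ((hasFDerivAt_phi P q).const_mul a)).fderiv
    have hlapv : ∀ i : Fin 2,
        fderiv ℝ (fun q => fderiv ℝ v q (EuclideanSpace.single i 1)) x0
          (EuclideanSpace.single i 1)
        = fderiv ℝ (fun q => fderiv ℝ c q (EuclideanSpace.single i 1)) x0
            (EuclideanSpace.single i 1) + a * 2 := by
      intro i
      set b := EuclideanSpace.single i (1 : ℝ) with hb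
      have hEq : (fun q => fderiv ℝ v q b)
          =ᶠ[𝓝 x0] (fun q => fderiv ℝ c q b + a * ∑ j : Fin 2, 2 * (q j - P j) * b j) := by
        refine Filter.eventually_of_mem (hΩ.mem_nhds hx0) fun q hq => ?_
        simp only [hAdd q hq, ContinuousLinearMap.add_apply, ContinuousLinearMap.coe_smul',
          Pi.smul_apply, smul_eq_mul, phi_deriv_apply]
      have hc2d : DifferentiableAt ℝ (fun q => fderiv ℝ c q b) x0 :=
        hcfdiff.clm_apply (differentiableAt_const _)
      have hq2 := hasFDerivAt_phi2 P x0 b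
      have hsum : HasFDerivAt (fun q => fderiv ℝ c q b + a * ∑ j : Fin 2, 2 * (q j - P j) * b j)
          (fderiv ℝ (fun q => fderiv ℝ c q b) x0
            + a • (∑ j : Fin 2, (2 * b j) • (EuclideanSpace.proj j : E2 →L[ℝ] ℝ))) x0 :=
        hc2d.hasFDerivAt.add (hq2.const_mul a)
      rw [hEq.fderiv_eq, hsum.fderiv]
      simp only [ContinuousLinearMap.add_apply, ContinuousLinearMap.smul_apply, smul_eq_mul]
      rw [hb, phi2_apply_single i]
    have hlapval : lap v x0 = -(K / D) + 4 * a := by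
      have hcl := hc.eqn x0 hx0
      unfold lap at hcl ⊢
      rw [Finset.sum_congr rfl fun i _ => hlapv i, Finset.sum_add_distrib, hcl]
      norm_num
      ring
    have h4M : 4 * M = K / D := by
      rw [hM]; field_simp
    rw [hlapval] at hlapnn
    have : 0 ≤ -4 * ε := by rw [ha] at hlapnn; linarith
    linarith
  have hx0F : x0 ∈ frontier Ω := by
    rw [frontier, hΩ.interior_eq]
    exact ⟨hx0cl, hx0notΩ⟩
  -- conclude
  have hc0 : c x0 = 0 := hc.bdry x0 hx0F
  have hrd : r ≤ dist P x0 := Metric.infDist_le_dist_of_mem hx0F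
  have hφx0 : dist P x0 ^ 2 = φ x0 := by
    rw [EuclideanSpace.dist_eq, Real.sq_sqrt (by positivity)]
    exact Finset.sum_congr rfl fun j _ => by rw [Real.dist_eq, sq_abs]; ring
  have hr2 : r ^ 2 ≤ φ x0 := by
    rw [← hφx0]
    exact pow_le_pow_left₀ hrnn hrd 2
  have hminP := hx0min (subset_closure hP)
  have hvP : v P = c P := by simp [hv, hφdef]
  have hvx0 : v x0 = a * φ x0 := by simp [hv, hc0]
  have hkey : a * r ^ 2 ≤ c P := by
    calc a * r ^ 2 ≤ a * φ x0 := by nlinarith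
    _ = v x0 := hvx0.symm
    _ ≤ v P := hminP
    _ = c P := hvP
  have hεr : ε * r ^ 2 ≤ δ := by
    have h1 : ε ≤ δ / (r ^ 2 + 1) := min_le_right _ _
    have h2 : ε * (r ^ 2 + 1) ≤ δ := by
      rw [← le_div_iff₀ (by positivity)]
      exact h1
    nlinarith
  rw [ha] at hkey
  nlinarith
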